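/- arXiv:2402.08651 — 2 statements merged into one kernel-verified Lean document; each statement's English description precedes it below -/
import Mathlib

section
/- Let s ≥ t ≥ 2, n ≥ 2s + t − 1, and let F' = F_1 ∪ F_2 ∪ F_3 ∪ F_4 be the lantern construction. If F_1, …, F_t ∈ F' are pairwise incomparable under inclusion, then |⋃_{i=1}^{t} (F_i ∩ [s+t−1])| ≥ t. -/
/-- `C` is a complete chain from `A` to `B`: totally ordered by inclusion,
with minimum `A`, maximum `B`, and `|C| = |B \ A| + 1`. -/
def IsCompleteChain (A B : Finset ℕ) (C : Finset (Finset ℕ)) : Prop :=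
  A ∈ C ∧ B ∈ C ∧ (∀ X ∈ C, A ⊆ X ∧ X ⊆ B) ∧
  (∀ X ∈ C, ∀ Y ∈ C, X ⊆ Y ∨ Y ⊆ X) ∧
  C.card = (B \ A).card + 1

/-- The first increment set of `L` (w.r.t. bottom `A`): the union of the sets in
`L` of size `|A| + 1`, minus `A`. -/
def firstIncrementSet (A : Finset ℕ) (L : Finset (Finset ℕ)) : Finset ℕ :=
  ((L.filter fun X => X.card = A.card + 1).sup id) \ A

/-- The last increment set of `L` (w.r.t. top `B`): `B` minus the intersection of
the sets in `L` of size `|B| - 1`. -/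
def lastIncrementSet (B : Finset ℕ) (L : Finset (Finset ℕ)) : Finset ℕ :=
  B.filter fun x => ∃ X ∈ L, X.card = B.card - 1 ∧ x ∉ X

/-- `L` is a union of `k` pairwise internally disjoint complete chains from `A` to `B`. -/
def IsLanternUnion (A B : Finset ℕ) (k : ℕ) (L : Finset (Finset ℕ)) : Prop :=
  ∃ C : Fin k → Finset (Finset ℕ),
    (∀ i, IsCompleteChain A B (C i)) ∧
    (∀ i j, i ≠ j → C i ∩ C j = {A, B}) ∧
    L = Finset.univ.biUnion C

/-- An upper `s`-lantern on `A`: a union of `s - 1` pairwise internally disjoint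
complete chains from `A` to `A ∪ [s+t+1, n]` whose last increment set is
`[s+t+1, 2s+t-1]`. -/
def IsUpperLantern (n s t : ℕ) (A : Finset ℕ) (L : Finset (Finset ℕ)) : Prop :=
  IsLanternUnion A (A ∪ Finset.Icc (s+t+1) n) (s-1) L ∧
  lastIncrementSet (A ∪ Finset.Icc (s+t+1) n) L = Finset.Icc (s+t+1) (2*s+t-1)

/-- A lower `t`-lantern on `A`: a union of `t - 1` pairwise internally disjoint
complete chains from `A` to `A ∪ [s+t+1, n]` whose first increment set is
`[s+t+1, s+2t-1]`. -/
def IsLowerLantern (n s t : ℕ) (A : Finset ℕ) (L : Finset (Finset ℕ)) : Prop :=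
  IsLanternUnion A (A ∪ Finset.Icc (s+t+1) n) (t-1) L ∧
  firstIncrementSet A L = Finset.Icc (s+t+1) (s+2*t-1)

/-- `F₁ = {[n]} ∪ {[n] \ {x} : x ∈ [s+t-1]}`. -/
def lanternF1 (n s t : ℕ) : Finset (Finset ℕ) :=
  insert (Finset.Icc 1 n) ((Finset.Icc 1 (s+t-1)).image fun x => (Finset.Icc 1 n).erase x)

/-- `F₂`: union over all `t`-element subsets `A` of `[s+t-1]` of the chosen upper lantern `Ls A`. -/
def lanternF2 (s t : ℕ) (Ls : Finset ℕ → Finset (Finset ℕ)) : Finset (Finset ℕ) :=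
  (Finset.powersetCard t (Finset.Icc 1 (s+t-1))).biUnion Ls

/-- `F₃`: union over all `(t-1)`-element subsets `A` of `[s+t-1]` of the chosen
lower lantern `Lt (A ∪ {s+t})`. -/
def lanternF3 (s t : ℕ) (Lt : Finset ℕ → Finset (Finset ℕ)) : Finset (Finset ℕ) :=
  (Finset.powersetCard (t-1) (Finset.Icc 1 (s+t-1))).biUnion fun A => Lt (insert (s+t) A)

/-- `F₄ = {∅} ∪ {{x} : x ∈ [s+t-1]}`. -/
def lanternF4 (s t : ℕ) : Finset (Finset ℕ) :=
  insert ∅ ((Finset.Icc 1 (s+t-1)).image fun x => ({x} : Finset ℕ))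

/-- The lantern construction `F' = F₁ ∪ F₂ ∪ F₃ ∪ F₄`. -/
def lanternFam (n s t : ℕ) (Ls Lt : Finset ℕ → Finset (Finset ℕ)) : Finset (Finset ℕ) :=
  lanternF1 n s t ∪ lanternF2 s t Ls ∪ lanternF3 s t Lt ∪ lanternF4 s t

lemma lantern_bounds {A B : Finset ℕ} {k : ℕ} {L : Finset (Finset ℕ)}
    (h : IsLanternUnion A B k L) {X : Finset ℕ} (hX : X ∈ L) : A ⊆ X ∧ X ⊆ B := by
  obtain ⟨C, hC, -, rfl⟩ := h
  simp only [Finset.mem_biUnion, Finset.mem_univ, true_and] at hX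
  obtain ⟨i, hi⟩ := hX
  exact (hC i).2.2.1 X hi

lemma lantern_pigeonhole {A B : Finset ℕ} {k m : ℕ} {L : Finset (Finset ℕ)}
    (h : IsLanternUnion A B k L) (G : Fin m → Finset ℕ) (hG : ∀ j, G j ∈ L)
    (hkm : k < m) : ∃ j j', j ≠ j' ∧ (G j ⊆ G j' ∨ G j' ⊆ G j) := by
  obtain ⟨C, hC, -, rfl⟩ := h
  have hch : ∀ j, ∃ i, G j ∈ C i := by
    intro j; have := hG j; simpa using this
  choose f hf using hch
  obtain ⟨j, j', hne, heq⟩ := Fintype.exists_ne_map_eq_of_card_lt f (by simpa using hkm)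
  exact ⟨j, j', hne, (hC (f j)).2.2.2.1 _ (hf j) _ (heq ▸ hf j')⟩

/-- any `t` pairwise incomparable members of the lantern
construction `F'` have `|⋃ᵢ (Fᵢ ∩ [s+t-1])| ≥ t`. -/
theorem stmt6
    (n s t : ℕ) (hts : t ≤ s) (ht : 2 ≤ t) (hn : 2*s + t - 1 ≤ n)
    (Ls Lt : Finset ℕ → Finset (Finset ℕ))
    (hLs : ∀ A ∈ Finset.powersetCard t (Finset.Icc 1 (s+t-1)),
      IsUpperLantern n s t A (Ls A))
    (hLt : ∀ A ∈ Finset.powersetCard (t-1) (Finset.Icc 1 (s+t-1)),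
      IsLowerLantern n s t (insert (s+t) A) (Lt (insert (s+t) A)))
    (G : Fin t → Finset ℕ)
    (hG : ∀ i, G i ∈ lanternFam n s t Ls Lt)
    (hinc : ∀ i j, i ≠ j → ¬ G i ⊆ G j) :
    t ≤ ((Finset.Icc 1 (s+t-1)).filter fun x => ∃ i, x ∈ G i).card := by
  set S := Finset.Icc 1 (s+t-1) with hSdef
  set T := S.filter (fun x => ∃ i, x ∈ G i) with hTdef
  have hScard : S.card = s + t - 1 := by
    rw [hSdef, Nat.card_Icc]; omega
  have hsub : ∀ (A : Finset ℕ) (i : Fin t), A ⊆ S → A ⊆ G i → A ⊆ T := by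
    intro A i hA hAG x hx
    exact Finset.mem_filter.2 ⟨hA hx, i, hAG hx⟩
  -- Case 1: some G i in F1
  by_cases h1 : ∃ i, G i ∈ lanternF1 n s t
  · obtain ⟨i, hi⟩ := h1
    simp only [lanternF1, Finset.mem_insert, Finset.mem_image] at hi
    rcases hi with hi | ⟨x, hx, hi⟩
    · have hST : S ⊆ T := by
        apply hsub S i (Finset.Subset.refl S)
        rw [hi, hSdef]
        intro y hy
        simp only [Finset.mem_Icc] at hy ⊢
        omega
      calc t ≤ S.card := by omega
        _ ≤ T.card := Finset.card_le_card hST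
    · have hST : S.erase x ⊆ T := by
        apply hsub _ i (Finset.erase_subset _ _)
        rw [← hi]
        intro y hy
        rw [Finset.mem_erase] at hy ⊢
        refine ⟨hy.1, ?_⟩
        have := hy.2
        rw [hSdef] at this
        simp only [Finset.mem_Icc] at this ⊢
        omega
      have : s + t - 2 ≤ (S.erase x).card := by
        have := Finset.card_erase_le (s := S) (a := x)
        have h2 := Finset.pred_card_le_card_erase (s := S) (a := x)
        omega
      calc t ≤ (S.erase x).card := by omega
        _ ≤ T.card := Finset.card_le_card hST
  by_cases h2 : ∃ i, G i ∈ lanternF2 s t Ls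
  · obtain ⟨i, hi⟩ := h2
    simp only [lanternF2, Finset.mem_biUnion] at hi
    obtain ⟨A, hA, hGi⟩ := hi
    have hup := hLs A hA
    rw [Finset.mem_powersetCard] at hA
    have hAG : A ⊆ G i := (lantern_bounds hup.1 hGi).1
    have : A ⊆ T := hsub A i hA.1 hAG
    calc t = A.card := hA.2.symm
      _ ≤ T.card := Finset.card_le_card this
  -- Now every G i is in F3 or F4
  have hF34 : ∀ i, G i ∈ lanternF3 s t Lt ∨ G i ∈ lanternF4 s t := by
    intro i
    have := hG i
    simp only [lanternFam, Finset.mem_union] at this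
    rcases this with ((hh | hh) | hh) | hh
    · exact absurd ⟨i, hh⟩ h1
    · exact absurd ⟨i, hh⟩ h2
    · exact Or.inl hh
    · exact Or.inr hh
  -- no G i is ∅
  have hne : ∀ i, G i ≠ ∅ := by
    intro i hemp
    obtain ⟨j, hj⟩ := Fintype.exists_ne_of_one_lt_card (by simp; omega) i
    exact hinc i j (Ne.symm hj) (by rw [hemp]; exact Finset.empty_subset _)
  by_cases h3 : ∃ i A, A ∈ Finset.powersetCard (t-1) S ∧ G i ∈ Lt (insert (s+t) A)
  · obtain ⟨i, A, hA, hGi⟩ := h3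
    have hlow := hLt A hA
    rw [Finset.mem_powersetCard] at hA
    have hbds := lantern_bounds hlow.1 hGi
    have hAGi : A ⊆ G i := fun x hx => hbds.1 (Finset.mem_insert_of_mem hx)
    by_cases hout : ∃ j, ∃ x ∈ S, x ∈ G j ∧ x ∉ A
    · obtain ⟨j, x, hxS, hxG, hxA⟩ := hout
      have hAT : A ⊆ T := hsub A i hA.1 hAGi
      have hxT : x ∈ T := Finset.mem_filter.2 ⟨hxS, j, hxG⟩
      have : insert x A ⊆ T := Finset.insert_subset hxT hAT
      have hcard : (insert x A).card = t := by
        rw [Finset.card_insert_of_notMem hxA, hA.2]; omega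
      calc t = (insert x A).card := hcard.symm
        _ ≤ T.card := Finset.card_le_card this
    · push_neg at hout
      -- every G j lies in the same lower lantern
      have hall : ∀ j, G j ∈ Lt (insert (s+t) A) := by
        intro j
        rcases hF34 j with hj | hj
        · simp only [lanternF3, Finset.mem_biUnion] at hj
          obtain ⟨A', hA', hGj⟩ := hj
          have hlow' := hLt A' hA'
          rw [Finset.mem_powersetCard] at hA'
          have hbds' := lantern_bounds hlow'.1 hGj
          have hA'Gj : A' ⊆ G j := fun x hx => hbds'.1 (Finset.mem_insert_of_mem hx)
          have hA'A : A' ⊆ A := fun x hx => hout j x (hA'.1 hx) (hA'Gj hx)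
          have : A' = A := Finset.eq_of_subset_of_card_le hA'A (by rw [hA'.2, hA.2])
          rwa [this] at hGj
        · simp only [lanternF4, Finset.mem_insert, Finset.mem_image] at hj
          rcases hj with hj | ⟨x, hx, hj⟩
          · exact absurd hj (hne j)
          · exfalso
            have hxA : x ∈ A := hout j x hx (by rw [← hj]; exact Finset.mem_singleton_self x)
            rcases eq_or_ne j i with rfl | hji
            · have hst : s + t ∈ G j := hbds.1 (Finset.mem_insert_self _ _)
              rw [← hj, Finset.mem_singleton] at hst
              rw [Finset.mem_Icc] at hx
              omega
            · exact hinc j i hji (by rw [← hj]; exact Finset.singleton_subset_iff.2 (hAGi hxA))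
      obtain ⟨j, j', hjj, hcomp⟩ := lantern_pigeonhole hlow.1 G hall (by omega)
      rcases hcomp with h | h
      · exact absurd h (hinc j j' hjj)
      · exact absurd h (hinc j' j (Ne.symm hjj))
  · -- all G i are singletons
    push_neg at h3
    have hsing : ∀ i, ∃ x, x ∈ S ∧ G i = {x} := by
      intro i
      rcases hF34 i with hi | hi
      · simp only [lanternF3, Finset.mem_biUnion] at hi
        obtain ⟨A, hA, hGi⟩ := hi
        exact absurd hGi (h3 i A hA)
      · simp only [lanternF4, Finset.mem_insert, Finset.mem_image] at hi
        rcases hi with hi | ⟨x, hx, hi⟩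
        · exact absurd hi (hne i)
        · exact ⟨x, hx, hi.symm⟩
    choose f hfS hfG using hsing
    have hfinj : Function.Injective f := by
      intro a b hab
      by_contra hne'
      exact hinc a b hne' (by rw [hfG a, hfG b, hab])
    have himg : Finset.univ.image f ⊆ T := by
      intro x hx
      simp only [Finset.mem_image, Finset.mem_univ, true_and] at hx
      obtain ⟨i, rfl⟩ := hx
      exact Finset.mem_filter.2 ⟨hfS i, i, by rw [hfG i]; exact Finset.mem_singleton_self _⟩
    calc t = (Finset.univ.image f).card := by
          rw [Finset.card_image_of_injective _ hfinj, Finset.card_univ, Fintype.card_fin]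
      _ ≤ T.card := Finset.card_le_card himg
end

section
/- Let s ≥ t ≥ 2, n ≥ 2s + t − 1, let F' be the lantern construction and F = F' ∪ F_5 the completed construction. If F ∈ 2^[n] ∖ F satisfies t ≤ |F ∩ [s+t−1]| < s + t − 1, then F ∪ {F} contains an induced copy of K_{s,t}. -/
open Finset

/-- A family of finite sets contains an induced copy of the complete bipartite
poset `K_{s,t}`: `s` pairwise incomparable "upper" sets and `t` pairwise
incomparable "lower" sets, each lower set strictly contained in each upper set. -/
def ContainsIndKst (s t : ℕ) (F : Finset (Finset ℕ)) : Prop :=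
  ∃ (U : Fin s → Finset ℕ) (D : Fin t → Finset ℕ),
    (∀ i, U i ∈ F) ∧ (∀ j, D j ∈ F) ∧
    (∀ i j, i ≠ j → ¬ U i ⊆ U j) ∧
    (∀ i j, i ≠ j → ¬ D i ⊆ D j) ∧
    (∀ i j, D j ⊂ U i)

/-- `F ⊆ 2^[n]` is induced `K_{s,t}`-saturated. -/
def IsIndKstSaturated (n s t : ℕ) (F : Finset (Finset ℕ)) : Prop :=
  (∀ A ∈ F, A ⊆ Finset.Icc 1 n) ∧
  ¬ ContainsIndKst s t F ∧
  ∀ G ⊆ Finset.Icc 1 n, G ∉ F → ContainsIndKst s t (insert G F)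

/-- `sat*(n, K_{s,t})`: minimum size of an induced `K_{s,t}`-saturated family in `2^[n]`. -/
noncomputable def satStarKst (n s t : ℕ) : ℕ :=
  sInf {m | ∃ F : Finset (Finset ℕ), IsIndKstSaturated n s t F ∧ F.card = m}

/-- `G₁ = ⋃_{i=2}^{s} {[n] \ A : A an i-element subset of [2s+t-1]}`. -/
def lanternG1 (n s t : ℕ) : Finset (Finset ℕ) :=
  (Finset.Icc 2 s).biUnion fun i =>
    (Finset.powersetCard i (Finset.Icc 1 (2*s+t-1))).image fun A => Finset.Icc 1 n \ A

/-- `G₂ = ⋃_{i=2}^{t} {A : A an i-element subset of [s+2t-1]}`. -/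
def lanternG2 (s t : ℕ) : Finset (Finset ℕ) :=
  (Finset.Icc 2 t).biUnion fun i => Finset.powersetCard i (Finset.Icc 1 (s+2*t-1))


lemma chain_exists_card {A B : Finset ℕ} {C : Finset (Finset ℕ)}
    (h : IsCompleteChain A B C) {k : ℕ} (hk1 : A.card ≤ k) (hk2 : k ≤ B.card) :
    ∃ X ∈ C, X.card = k := by
  obtain ⟨hA, hB, hbet, htot, hcard⟩ := h
  have hAB : A ⊆ B := (hbet A hA).2
  have hinj : Set.InjOn Finset.card (C : Set (Finset ℕ)) := by
    intro X hX Y hY hXY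
    rcases htot X hX Y hY with h | h
    · exact Finset.eq_of_subset_of_card_le h (le_of_eq hXY.symm)
    · exact (Finset.eq_of_subset_of_card_le h (le_of_eq hXY)).symm
  have hsub : C.image Finset.card ⊆ Finset.Icc A.card B.card := by
    intro k hk
    obtain ⟨X, hX, rfl⟩ := Finset.mem_image.mp hk
    exact Finset.mem_Icc.mpr ⟨Finset.card_le_card (hbet X hX).1,
      Finset.card_le_card (hbet X hX).2⟩
  have hcard2 : (C.image Finset.card).card = (Finset.Icc A.card B.card).card := by
    rw [Finset.card_image_of_injOn hinj, hcard, Finset.card_sdiff_of_subset hAB, Nat.card_Icc]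
    have := Finset.card_le_card hAB
    omega
  have heq : C.image Finset.card = Finset.Icc A.card B.card :=
    Finset.eq_of_subset_of_card_le hsub (le_of_eq hcard2.symm)
  have : k ∈ C.image Finset.card := heq ▸ Finset.mem_Icc.mpr ⟨hk1, hk2⟩
  obtain ⟨X, hX, hXk⟩ := Finset.mem_image.mp this
  exact ⟨X, hX, hXk⟩

/-- for the completed construction `F = F' ∪ F₅`, adding any
`F ∈ 2^[n] \ F` with `t ≤ |F ∩ [s+t-1]| < s + t - 1` creates an induced `K_{s,t}`. -/
theorem stmt10
    (n s t : ℕ) (hts : t ≤ s) (ht : 2 ≤ t) (hn : 2*s + t - 1 ≤ n)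
    (Ls Lt : Finset ℕ → Finset (Finset ℕ))
    (hLs : ∀ A ∈ Finset.powersetCard t (Finset.Icc 1 (s+t-1)),
      IsUpperLantern n s t A (Ls A))
    (hLt : ∀ A ∈ Finset.powersetCard (t-1) (Finset.Icc 1 (s+t-1)),
      IsLowerLantern n s t (insert (s+t) A) (Lt (insert (s+t) A)))
    (F5 : Finset (Finset ℕ))
    (hF5sub : F5 ⊆ lanternG1 n s t ∪ lanternG2 s t)
    (hF5free : ¬ ContainsIndKst s t (lanternFam n s t Ls Lt ∪ F5))
    (hF5max : ∀ X ∈ lanternG1 n s t ∪ lanternG2 s t, X ∉ F5 →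
      ContainsIndKst s t (lanternFam n s t Ls Lt ∪ insert X F5))
    (F : Finset ℕ) (hFsub : F ⊆ Finset.Icc 1 n)
    (hFnot : F ∉ lanternFam n s t Ls Lt ∪ F5)
    (hlow : t ≤ (F ∩ Finset.Icc 1 (s+t-1)).card)
    (hhigh : (F ∩ Finset.Icc 1 (s+t-1)).card < s + t - 1) :
    ContainsIndKst s t (insert F (lanternFam n s t Ls Lt ∪ F5)) := by
  classical
  have hs2 : 2 ≤ s := le_trans ht hts
  have hstn : s + t + 1 ≤ n := by omega
  have hFnotFam : F ∉ lanternFam n s t Ls Lt := fun h => hFnot (Finset.mem_union_left _ h)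
  have hFnotF5 : F ∉ F5 := fun h => hFnot (Finset.mem_union_right _ h)
  by_cases hG : F ∈ lanternG1 n s t ∪ lanternG2 s t
  · have h := hF5max F hG hFnotF5
    rwa [Finset.union_insert] at h
  obtain ⟨A, hAP, hAcard⟩ := Finset.exists_subset_card_eq hlow
  have hAS1 : A ⊆ Finset.Icc 1 (s+t-1) := hAP.trans Finset.inter_subset_right
  have hAF : A ⊆ F := hAP.trans Finset.inter_subset_left
  have hApow : A ∈ Finset.powersetCard t (Finset.Icc 1 (s+t-1)) :=
    Finset.mem_powersetCard.mpr ⟨hAS1, hAcard⟩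
  obtain ⟨⟨C, hC, hdisj, hLeq⟩, hlast⟩ := hLs A hApow
  set B := A ∪ Finset.Icc (s+t+1) n with hB
  have hdisjAB : Disjoint A (Finset.Icc (s+t+1) n) := by
    rw [Finset.disjoint_left]
    intro a ha ha2
    have h1 := Finset.mem_Icc.mp (hAS1 ha)
    have h2 := Finset.mem_Icc.mp ha2
    omega
  have hBcard : B.card = n - s := by
    rw [hB, Finset.card_union_of_disjoint hdisjAB, hAcard, Nat.card_Icc]
    omega
  have hAB : A ⊆ B := Finset.subset_union_left
  have hmem2 : ∀ X ∈ Ls A, X ∈ lanternFam n s t Ls Lt := by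
    intro X hX
    simp only [lanternFam, Finset.mem_union]
    exact Or.inl (Or.inl (Or.inr (Finset.mem_biUnion.mpr ⟨A, hApow, hX⟩)))
  have hmemL : ∀ i : Fin (s-1), ∀ X ∈ C i, X ∈ lanternFam n s t Ls Lt := by
    intro i X hX
    exact hmem2 X (hLeq ▸ Finset.mem_biUnion.mpr ⟨i, Finset.mem_univ i, hX⟩)
  have hcoatom : ∀ y ∈ Finset.Icc (s+t+1) (2*s+t-1), B.erase y ∈ Ls A := by
    intro y hy
    have hy' : y ∈ lastIncrementSet B (Ls A) := hlast ▸ hy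
    rw [lastIncrementSet, Finset.mem_filter] at hy'
    obtain ⟨hyB, X, hXL, hXcard, hyX⟩ := hy'
    have hXB : X ⊆ B := by
      rw [hLeq] at hXL
      obtain ⟨i, _, hXC⟩ := Finset.mem_biUnion.mp hXL
      exact ((hC i).2.2.1 X hXC).2
    have hXe : X ⊆ B.erase y := Finset.subset_erase.mpr ⟨hXB, hyX⟩
    have hXeq : X = B.erase y := Finset.eq_of_subset_of_card_le hXe (by
      rw [Finset.card_erase_of_mem hyB, hXcard])
    rwa [← hXeq]
  -- the t lower singletons
  set e : Fin t → ℕ := fun j => (A.orderIsoOfFin hAcard j : ℕ) with he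
  have heA : ∀ j, e j ∈ A := fun j => (A.orderIsoOfFin hAcard j).2
  have heinj : Function.Injective e := fun i j h =>
    (A.orderIsoOfFin hAcard).injective (Subtype.ext h)
  have hmem4 : ∀ j, ({e j} : Finset ℕ) ∈ lanternFam n s t Ls Lt := by
    intro j
    simp only [lanternFam, Finset.mem_union]
    exact Or.inr (Finset.mem_insert.mpr (Or.inr
      (Finset.mem_image.mpr ⟨e j, hAS1 (heA j), rfl⟩)))
  have hFcardt : t ≤ F.card :=
    le_trans hlow (Finset.card_le_card Finset.inter_subset_left)
  have heS1 : ∀ j, 1 ≤ e j ∧ e j ≤ s+t-1 := fun j => Finset.mem_Icc.mp (hAS1 (heA j))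
  have hDinc : ∀ i j : Fin t, i ≠ j → ¬ ({e i} : Finset ℕ) ⊆ {e j} := by
    intro i j hij hsub
    exact hij (heinj (Finset.mem_singleton.mp (hsub (Finset.mem_singleton_self _))))
  by_cases hFB : F ⊆ B
  · -- Case 1 : F strictly between A and B, use s-1 same-size lantern sets
    have hFneA : F ≠ A := fun h => hFnotFam (h ▸ hmemL ⟨0, by omega⟩ A ((hC _).1))
    have hFneB : F ≠ B := fun h => hFnotFam (h ▸ hmemL ⟨0, by omega⟩ B ((hC _).2.1))
    have hcardA : t < F.card := by
      rcases (hAcard ▸ Finset.card_le_card hAF).lt_or_eq with h | h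
      · exact h
      · exact absurd (Finset.eq_of_subset_of_card_le hAF (by omega)).symm hFneA
    have hcardB : F.card < B.card :=
      Finset.card_lt_card (HasSubset.Subset.ssubset_of_ne hFB hFneB)
    choose E hEC hEcard using fun i : Fin (s-1) =>
      chain_exists_card (hC i) (k := F.card) (hAcard ▸ le_of_lt hcardA) (le_of_lt hcardB)
    have hEmem : ∀ i, E i ∈ lanternFam n s t Ls Lt := fun i => hmemL i _ (hEC i)
    have hEneF : ∀ i, E i ≠ F := fun i h => hFnotFam (h ▸ hEmem i)
    have hEinj : ∀ i j : Fin (s-1), i ≠ j → E i ≠ E j := by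
      intro i j hij h
      have h2 : E i ∈ C i ∩ C j := Finset.mem_inter.mpr ⟨hEC i, h ▸ hEC j⟩
      rw [hdisj i j hij] at h2
      rcases Finset.mem_insert.mp h2 with h3 | h3
      · have := hEcard i
        rw [h3, hAcard] at this
        omega
      · have := hEcard i
        rw [Finset.mem_singleton.mp h3] at this
        omega
    refine ⟨fun i => if h : (i:ℕ) < s - 1 then E ⟨i, h⟩ else F,
      fun j => {e j}, ?_, ?_, ?_, hDinc, ?_⟩
    · intro i
      by_cases h : (i:ℕ) < s - 1
      · simp only [dif_pos h]
        exact Finset.mem_insert_of_mem (Finset.mem_union_left _ (hEmem _))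
      · simp only [dif_neg h]
        exact Finset.mem_insert_self _ _
    · intro j
      exact Finset.mem_insert_of_mem (Finset.mem_union_left _ (hmem4 j))
    · intro i j hij hsub
      have hUcard : ∀ k : Fin s,
          (if h : (k:ℕ) < s - 1 then E ⟨k, h⟩ else F).card = F.card := by
        intro k
        by_cases h : (k:ℕ) < s - 1
        · simp only [dif_pos h, hEcard]
        · simp only [dif_neg h]
      have heq : (if h : (i:ℕ) < s - 1 then E ⟨i, h⟩ else F)
          = (if h : (j:ℕ) < s - 1 then E ⟨j, h⟩ else F) :=
        Finset.eq_of_subset_of_card_le hsub (by rw [hUcard i, hUcard j])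
      by_cases h1 : (i:ℕ) < s - 1 <;> by_cases h2 : (j:ℕ) < s - 1
      · rw [dif_pos h1, dif_pos h2] at heq
        exact hEinj ⟨i, h1⟩ ⟨j, h2⟩ (by
          simp only [ne_eq, Fin.mk.injEq]
          exact fun hv => hij (Fin.ext hv)) heq
      · rw [dif_pos h1, dif_neg h2] at heq
        exact hEneF _ heq
      · rw [dif_neg h1, dif_pos h2] at heq
        exact hEneF _ heq.symm
      · exact hij (Fin.ext (by omega))
    · intro i j
      have hsub : ({e j} : Finset ℕ) ⊆ if h : (i:ℕ) < s - 1 then E ⟨i, h⟩ else F := by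
        by_cases h : (i:ℕ) < s - 1
        · simp only [dif_pos h]
          exact Finset.singleton_subset_iff.mpr (((hC _).2.2.1 _ (hEC ⟨i, h⟩)).1 (heA j))
        · simp only [dif_neg h]
          exact Finset.singleton_subset_iff.mpr (hAF (heA j))
      refine HasSubset.Subset.ssubset_of_ne hsub (fun hcon' => ?_)
      have hcon : ({e j} : Finset ℕ)
          = (if h : (i:ℕ) < s - 1 then E ⟨i, h⟩ else F) := hcon'
      have hc1 : ({e j} : Finset ℕ).card = 1 := Finset.card_singleton _
      have hc2 : (if h : (i:ℕ) < s - 1 then E ⟨i, h⟩ else F).card = F.card := by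
        by_cases h : (i:ℕ) < s - 1
        · simp only [dif_pos h, hEcard]
        · simp only [dif_neg h]
      rw [hcon, hc2] at hc1
      omega

  · by_cases h2b : ∃ y ∈ Finset.Icc (s+t+1) (2*s+t-1), B.erase y ⊆ F
    · -- Case 2b : contradiction, F must be in F1 or G1 or a coatom
      exfalso
      obtain ⟨y0, hy0, hy0sub⟩ := h2b
      have hy0Icc := Finset.mem_Icc.mp hy0
      have hy0n : y0 ∈ Finset.Icc (s+t+1) n := Finset.mem_Icc.mpr ⟨hy0Icc.1, by omega⟩
      have hy0B : y0 ∈ B := Finset.mem_union_right _ hy0n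
      have hFneCo : F ≠ B.erase y0 := fun h => hFnotFam (h ▸ hmem2 _ (hcoatom y0 hy0))
      have hss : B.erase y0 ⊂ F :=
        HasSubset.Subset.ssubset_of_ne hy0sub (fun h => hFneCo h.symm)
      have hFge : n - s ≤ F.card := by
        have hlt := Finset.card_lt_card hss
        rw [Finset.card_erase_of_mem hy0B, hBcard] at hlt
        omega
      have hFlen : F.card ≤ n := by
        have := Finset.card_le_card hFsub
        rwa [Nat.card_Icc, Nat.add_sub_cancel] at this
      set comp := Finset.Icc 1 n \ F with hcomp
      have hFeq : F = Finset.Icc 1 n \ comp := by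
        rw [hcomp, Finset.sdiff_sdiff_eq_self hFsub]
      have hcompcard : comp.card ≤ s := by
        rw [hcomp, Finset.card_sdiff_of_subset hFsub, Nat.card_Icc]
        omega
      have hcompsub : comp ⊆ Finset.Icc 1 (2*s+t-1) := by
        intro x hx
        rw [hcomp, Finset.mem_sdiff] at hx
        obtain ⟨hx1, hx2⟩ := hx
        rw [Finset.mem_Icc] at hx1
        rw [Finset.mem_Icc]
        refine ⟨hx1.1, ?_⟩
        by_contra hgt
        push_neg at hgt
        have hxB : x ∈ B.erase y0 := by
          refine Finset.mem_erase.mpr ⟨by omega, ?_⟩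
          exact Finset.mem_union_right _ (Finset.mem_Icc.mpr ⟨by omega, hx1.2⟩)
        exact hx2 (hy0sub hxB)
      have hS1card : (Finset.Icc 1 (s+t-1)).card = s+t-1 := by
        rw [Nat.card_Icc]
        omega
      obtain ⟨x0, hx0S, hx0F⟩ : ∃ x0 ∈ Finset.Icc 1 (s+t-1), x0 ∉ F := by
        by_contra hall
        push_neg at hall
        have hsub2 : Finset.Icc 1 (s+t-1) ⊆ F ∩ Finset.Icc 1 (s+t-1) :=
          fun x hx => Finset.mem_inter.mpr ⟨hall x hx, hx⟩
        have := Finset.card_le_card hsub2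
        omega
      have hx0Icc := Finset.mem_Icc.mp hx0S
      have hx0comp : x0 ∈ comp := by
        rw [hcomp, Finset.mem_sdiff]
        exact ⟨Finset.mem_Icc.mpr ⟨hx0Icc.1, by omega⟩, hx0F⟩
      have hcomppos : 1 ≤ comp.card := Finset.card_pos.mpr ⟨x0, hx0comp⟩
      rcases eq_or_lt_of_le hcomppos with hone | htwo
      · -- comp = {x0}, so F ∈ F1
        obtain ⟨a, ha⟩ := Finset.card_eq_one.mp hone.symm
        have hax0 : a = x0 := by
          have := hx0comp
          rw [ha, Finset.mem_singleton] at this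
          exact this.symm
        apply hFnotFam
        have hFe : F = (Finset.Icc 1 n).erase x0 := by
          rw [hFeq, ha, hax0, ← Finset.sdiff_singleton_eq_erase]
        simp only [lanternFam, Finset.mem_union]
        refine Or.inl (Or.inl (Or.inl ?_))
        rw [lanternF1]
        exact Finset.mem_insert_of_mem (Finset.mem_image.mpr ⟨x0, hx0S, hFe.symm⟩)
      · -- 2 ≤ comp.card ≤ s, so F ∈ G1
        apply hG
        apply Finset.mem_union_left
        rw [lanternG1]
        apply Finset.mem_biUnion.mpr
        refine ⟨comp.card, Finset.mem_Icc.mpr ⟨htwo, hcompcard⟩, ?_⟩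
        exact Finset.mem_image.mpr ⟨comp,
          Finset.mem_powersetCard.mpr ⟨hcompsub, rfl⟩, hFeq.symm⟩

    · -- Case 2a : coatoms + F as uppers, singletons as lowers
      push_neg at h2b
      have hyIcc : ∀ v : ℕ, v < s - 1 → s+t+1+v ∈ Finset.Icc (s+t+1) (2*s+t-1) := by
        intro v hv
        rw [Finset.mem_Icc]
        omega
      have hyB : ∀ v : ℕ, v < s - 1 → s+t+1+v ∈ B := by
        intro v hv
        exact Finset.mem_union_right _ (Finset.mem_Icc.mpr ⟨by omega, by omega⟩)
      have hWmem : ∀ v : ℕ, v < s - 1 → B.erase (s+t+1+v) ∈ lanternFam n s t Ls Lt :=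
        fun v hv => hmem2 _ (hcoatom _ (hyIcc v hv))
      have hWcard : ∀ v : ℕ, v < s - 1 → (B.erase (s+t+1+v)).card = n - s - 1 := by
        intro v hv
        rw [Finset.card_erase_of_mem (hyB v hv), hBcard]
      refine ⟨fun i => if h : (i:ℕ) < s - 1 then B.erase (s+t+1+(i:ℕ)) else F,
        fun j => {e j}, ?_, ?_, ?_, hDinc, ?_⟩
      · intro i
        by_cases h : (i:ℕ) < s - 1
        · simp only [dif_pos h]
          exact Finset.mem_insert_of_mem (Finset.mem_union_left _ (hWmem _ h))
        · simp only [dif_neg h]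
          exact Finset.mem_insert_self _ _
      · intro j
        exact Finset.mem_insert_of_mem (Finset.mem_union_left _ (hmem4 j))
      · intro i j hij hsub'
        have hsub : (if h : (i:ℕ) < s - 1 then B.erase (s+t+1+(i:ℕ)) else F)
            ⊆ (if h : (j:ℕ) < s - 1 then B.erase (s+t+1+(j:ℕ)) else F) := hsub'
        by_cases h1 : (i:ℕ) < s - 1 <;> by_cases h2 : (j:ℕ) < s - 1
        · rw [dif_pos h1, dif_pos h2] at hsub
          have hne : s+t+1+(i:ℕ) ≠ s+t+1+(j:ℕ) := by
            intro hc
            exact hij (Fin.ext (by omega))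
          have heq : B.erase (s+t+1+(i:ℕ)) = B.erase (s+t+1+(j:ℕ)) :=
            Finset.eq_of_subset_of_card_le hsub (by rw [hWcard _ h1, hWcard _ h2])
          have : s+t+1+(j:ℕ) ∈ B.erase (s+t+1+(i:ℕ)) :=
            Finset.mem_erase.mpr ⟨fun hc => hne hc.symm, hyB _ h2⟩
          rw [heq] at this
          exact (Finset.mem_erase.mp this).1 rfl
        · rw [dif_pos h1, dif_neg h2] at hsub
          exact h2b _ (hyIcc _ h1) hsub
        · rw [dif_neg h1, dif_pos h2] at hsub
          exact hFB (hsub.trans (Finset.erase_subset _ _))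
        · exact hij (Fin.ext (by omega))
      · intro i j
        have hFcn : F.card ≤ n := by
          have := Finset.card_le_card hFsub
          rwa [Nat.card_Icc, Nat.add_sub_cancel] at this
        by_cases h : (i:ℕ) < s - 1
        · have hsub : ({e j} : Finset ℕ) ⊆ B.erase (s+t+1+(i:ℕ)) := by
            refine Finset.singleton_subset_iff.mpr (Finset.mem_erase.mpr ⟨?_, hAB (heA j)⟩)
            have := (heS1 j).2
            omega
          have hgoal : ({e j} : Finset ℕ) ⊂ B.erase (s+t+1+(i:ℕ)) := by
            refine HasSubset.Subset.ssubset_of_ne hsub (fun hc => ?_)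
            have hc1 : ({e j} : Finset ℕ).card = 1 := Finset.card_singleton _
            rw [hc, hWcard _ h] at hc1
            omega
          simpa only [dif_pos h] using hgoal
        · have hsub : ({e j} : Finset ℕ) ⊆ F :=
            Finset.singleton_subset_iff.mpr (hAF (heA j))
          have hgoal : ({e j} : Finset ℕ) ⊂ F := by
            refine HasSubset.Subset.ssubset_of_ne hsub (fun hc => ?_)
            have hc1 : ({e j} : Finset ℕ).card = 1 := Finset.card_singleton _
            rw [hc] at hc1
            omega
          simpa only [dif_neg h] using hgoal
end
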